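/- For every w ∈ ℝⁿ, the function ψ has a gradient at w equal to Qw − Q·Π_S(u(w)); that is, ψ is differentiable everywhere with ∇ψ(w) = Qw − Q Π_S(x − σ(Qw + c)). -/

import Mathlib

open RealInnerProductSpace

variable {n : ℕ}

/-- `u(w) = x − σ(Qw + c)`. -/
noncomputable def uMap (Q : Matrix (Fin n) (Fin n) ℝ) (c x : EuclideanSpace ℝ (Fin n))
    (σ : ℝ) (w : EuclideanSpace ℝ (Fin n)) : EuclideanSpace ℝ (Fin n) :=
  x - σ • (Matrix.toEuclideanLin Q w + c)

/-- The reduced augmented Lagrangian objective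
`ψ(w) = ½⟪w,Qw⟫ + (1/2σ)(‖u(w)‖² − ‖u(w) − Π_S(u(w))‖²) − (1/2σ)‖x‖²`,
where `proj` is the metric projection onto `S`. -/
noncomputable def psi (Q : Matrix (Fin n) (Fin n) ℝ) (c x : EuclideanSpace ℝ (Fin n))
    (σ : ℝ) (proj : EuclideanSpace ℝ (Fin n) → EuclideanSpace ℝ (Fin n))
    (w : EuclideanSpace ℝ (Fin n)) : ℝ :=
  1 / 2 * ⟪w, Matrix.toEuclideanLin Q w⟫ +
    1 / (2 * σ) * (‖uMap Q c x σ w‖ ^ 2 - ‖uMap Q c x σ w - proj (uMap Q c x σ w)‖ ^ 2) -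
    1 / (2 * σ) * ‖x‖ ^ 2

variable {F : Type*} [NormedAddCommGroup F] [InnerProductSpace ℝ F]

private lemma proj_VI {S : Set F} (hSconv : Convex ℝ S)
    {proj : F → F} (hproj : ∀ v, proj v ∈ S ∧ ∀ q ∈ S, ‖v - proj v‖ ≤ ‖v - q‖)
    (v : F) : ∀ q ∈ S, ⟪v - proj v, q - proj v⟫ ≤ 0 := by
  haveI : Nonempty S := ⟨⟨proj v, (hproj v).1⟩⟩
  refine (norm_eq_iInf_iff_real_inner_le_zero hSconv (hproj v).1).mp ?_
  refine le_antisymm ?_ (ciInf_le (f := fun q : S => ‖v - (q : F)‖) ⟨0, fun _ ⟨_, h⟩ => h ▸ norm_nonneg _⟩ ⟨proj v, (hproj v).1⟩)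
  exact le_ciInf fun q => (hproj v).2 q q.2

private lemma dsq_lower {S : Set F} (hSconv : Convex ℝ S)
    {proj : F → F} (hproj : ∀ v, proj v ∈ S ∧ ∀ q ∈ S, ‖v - proj v‖ ≤ ‖v - q‖)
    (v k : F) :
    2 * ⟪k, v - proj v⟫ ≤ ‖v + k - proj (v + k)‖ ^ 2 - ‖v - proj v‖ ^ 2 := by
  have hVI := proj_VI hSconv hproj v (proj (v + k)) (hproj (v + k)).1
  have hexp : v + k - proj (v + k) = (v - proj v) + (k + proj v - proj (v + k)) := by abel
  rw [hexp, norm_add_sq_real]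
  have h2 : ⟪v - proj v, k + proj v - proj (v + k)⟫
      = ⟪v - proj v, k⟫ + ⟪v - proj v, proj v - proj (v+k)⟫ := by
    rw [← inner_add_right]; congr 1; abel
  have h3 : ⟪v - proj v, proj v - proj (v+k)⟫ = -⟪v - proj v, proj (v+k) - proj v⟫ := by
    rw [← inner_neg_right]; congr 1; abel
  have h4 := real_inner_comm k (v - proj v)
  nlinarith [sq_nonneg ‖k + proj v - proj (v + k)‖]

private lemma dsq_upper {S : Set F}
    {proj : F → F} (hproj : ∀ v, proj v ∈ S ∧ ∀ q ∈ S, ‖v - proj v‖ ≤ ‖v - q‖)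
    (v k : F) :
    ‖v + k - proj (v + k)‖ ^ 2 - ‖v - proj v‖ ^ 2 ≤ 2 * ⟪k, v - proj v⟫ + ‖k‖ ^ 2 := by
  have h1 : ‖v + k - proj (v + k)‖ ≤ ‖v + k - proj v‖ := (hproj (v + k)).2 _ (hproj v).1
  have hexp : v + k - proj v = (v - proj v) + k := by abel
  have h2 : ‖v + k - proj v‖ ^ 2 = ‖v - proj v‖ ^ 2 + 2 * ⟪v - proj v, k⟫ + ‖k‖ ^ 2 := by
    rw [hexp, norm_add_sq_real]
  have h4 := real_inner_comm k (v - proj v)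
  nlinarith [norm_nonneg (v + k - proj (v + k)), norm_nonneg (v + k - proj v)]

set_option maxHeartbeats 1000000
set_option synthInstance.maxHeartbeats 200000

/-- `ψ` is differentiable everywhere, with gradient `∇ψ(w) = Qw − Q Π_S(x − σ(Qw + c))`. -/
theorem psi_hasGradientAt
    (S : Set (EuclideanSpace ℝ (Fin n))) (hSne : S.Nonempty) (hScl : IsClosed S)
    (hSconv : Convex ℝ S)
    (proj : EuclideanSpace ℝ (Fin n) → EuclideanSpace ℝ (Fin n))
    (hproj : ∀ v, proj v ∈ S ∧ ∀ q ∈ S, ‖v - proj v‖ ≤ ‖v - q‖)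
    (Q : Matrix (Fin n) (Fin n) ℝ) (hQ : Q.PosSemidef)
    (c x : EuclideanSpace ℝ (Fin n)) (σ : ℝ) (hσ : 0 < σ)
    (w : EuclideanSpace ℝ (Fin n)) :
    HasGradientAt (psi Q c x σ proj)
      (Matrix.toEuclideanLin Q w - Matrix.toEuclideanLin Q (proj (uMap Q c x σ w))) w := by
  set A := Matrix.toEuclideanLin Q with hAdef
  have hsym : A.IsSymmetric := Matrix.isHermitian_iff_isSymmetric.mp hQ.1
  set C := ‖LinearMap.toContinuousLinearMap A‖ with hCdef
  have hC0 : 0 ≤ C := norm_nonneg _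
  have hC : ∀ z, ‖A z‖ ≤ C * ‖z‖ := fun z => by
    simpa using (LinearMap.toContinuousLinearMap A).le_opNorm z
  set u := uMap Q c x σ w with hudef
  set p := proj u with hpdef
  have key : ∀ h : EuclideanSpace ℝ (Fin n),
      |psi Q c x σ proj (w + h) - psi Q c x σ proj w - ⟪A w - A p, h⟫|
        ≤ (C / 2 + σ * C ^ 2 / 2) * ‖h‖ ^ 2 := by
    intro h
    set k : EuclideanSpace ℝ (Fin n) := (-σ) • A h with hkdef
    have huw : uMap Q c x σ (w + h) = u + k := by
      simp only [hudef, uMap, hkdef, ← hAdef, map_add, smul_add, neg_smul]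
      abel
    set E := ‖u + k - proj (u + k)‖ ^ 2 - ‖u - p‖ ^ 2 - 2 * ⟪k, u - p⟫ with hEdef
    have hE0 : 0 ≤ E := by
      have := dsq_lower hSconv hproj u k; rw [hEdef, hpdef]; linarith
    have hE1 : E ≤ ‖k‖ ^ 2 := by
      have := dsq_upper hproj u k; rw [hEdef, hpdef]; linarith
    have hknorm : ‖k‖ ^ 2 = σ ^ 2 * ‖A h‖ ^ 2 := by
      rw [hkdef, norm_smul]
      rw [Real.norm_eq_abs, abs_neg, abs_of_pos hσ]; ring
    have heq : psi Q c x σ proj (w + h) - psi Q c x σ proj w - ⟪A w - A p, h⟫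
        = 1 / 2 * ⟪h, A h⟫ + 1 / (2 * σ) * (‖k‖ ^ 2 - E) := by
      have e1 : ⟪w + h, A (w + h)⟫ = ⟪w, A w⟫ + ⟪w, A h⟫ + ⟪h, A w⟫ + ⟪h, A h⟫ := by
        rw [map_add, inner_add_left, inner_add_right, inner_add_right]; ring
      have e2 : ‖u + k‖ ^ 2 = ‖u‖ ^ 2 + 2 * ⟪u, k⟫ + ‖k‖ ^ 2 := norm_add_sq_real u k
      have e3 : ⟪u, k⟫ = (-σ) * ⟪u, A h⟫ := real_inner_smul_right u (A h) (-σ)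
      have e4 : ⟪A w - A p, h⟫ = ⟪A w, h⟫ - ⟪A p, h⟫ := inner_sub_left _ _ _
      have e5 : ⟪k, u - p⟫ = (-σ) * (⟪A h, u⟫ - ⟪A h, p⟫) := by
        rw [hkdef, real_inner_smul_left, inner_sub_right]
      have s1 : ⟪A w, h⟫ = ⟪w, A h⟫ := hsym w h
      have s2 : ⟪A p, h⟫ = ⟪p, A h⟫ := hsym p h
      have c1 : ⟪h, A w⟫ = ⟪A w, h⟫ := real_inner_comm _ _
      have c2 : ⟪A h, u⟫ = ⟪u, A h⟫ := real_inner_comm _ _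
      have c3 : ⟪A h, p⟫ = ⟪p, A h⟫ := real_inner_comm _ _
      have hEe : ‖u + k - proj (u + k)‖ ^ 2 = E + ‖u - p‖ ^ 2 + 2 * ⟪k, u - p⟫ := by
        rw [hEdef]; ring
      simp only [psi, huw, ← hAdef, ← hudef, ← hpdef]
      rw [e1, hEe, e2, e3, e4, e5, c1, c2, c3, s1, s2]
      field_simp
      ring
    rw [heq]
    have h1 : |⟪h, A h⟫| ≤ C * ‖h‖ ^ 2 := by
      have := abs_real_inner_le_norm h (A h)
      have := hC h
      nlinarith [norm_nonneg h, norm_nonneg (A h)]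
    have h2 : ‖k‖ ^ 2 ≤ σ ^ 2 * (C * ‖h‖) ^ 2 := by
      rw [hknorm]
      have h6 := mul_self_le_mul_self (norm_nonneg (A h)) (hC h)
      nlinarith [sq_nonneg σ]
    have h3 : |‖k‖ ^ 2 - E| ≤ ‖k‖ ^ 2 := by
      rw [abs_le]; constructor <;> nlinarith [sq_nonneg ‖k‖]
    have habs := abs_add_le (1 / 2 * ⟪h, A h⟫) (1 / (2 * σ) * (‖k‖ ^ 2 - E))
    rw [abs_mul, abs_mul] at habs
    have hσabs : |1 / (2 * σ)| = 1 / (2 * σ) := abs_of_pos (by positivity)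
    have h12 : |(1:ℝ) / 2| = 1 / 2 := by norm_num
    rw [hσabs, h12] at habs
    have hbd : 1 / 2 * |⟪h, A h⟫| + 1 / (2 * σ) * |‖k‖ ^ 2 - E|
        ≤ (C / 2 + σ * C ^ 2 / 2) * ‖h‖ ^ 2 := by
      have h4 : 1 / (2 * σ) * |‖k‖ ^ 2 - E| ≤ 1 / (2 * σ) * (σ ^ 2 * (C * ‖h‖) ^ 2) := by
        apply mul_le_mul_of_nonneg_left (le_trans h3 h2) (by positivity)
      have h5 : 1 / (2 * σ) * (σ ^ 2 * (C * ‖h‖) ^ 2) = σ * C ^ 2 / 2 * ‖h‖ ^ 2 := by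
        field_simp
      nlinarith
    linarith
  rw [hasGradientAt_iff_isLittleO_nhds_zero]
  have hbigO : (fun h => psi Q c x σ proj (w + h) - psi Q c x σ proj w - ⟪A w - A p, h⟫)
      =O[nhds 0] fun h : EuclideanSpace ℝ (Fin n) => ‖h‖ ^ 2 := by
    apply Asymptotics.IsBigO.of_bound (C / 2 + σ * C ^ 2 / 2)
    filter_upwards with h
    rw [Real.norm_eq_abs, Real.norm_eq_abs, abs_of_nonneg (by positivity : (0:ℝ) ≤ ‖h‖ ^ 2)]
    exact key h
  exact hbigO.trans_isLittleO (Asymptotics.isLittleO_norm_pow_id one_lt_two)
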